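/- If the characteristic equation det(−κ² I + κ P₁ + P₀) = 0 has a non-real root κ for some matrices P₁, P₀ (symbols at some frequency ω'), then the family of functions t ↦ e^{i|ω|κt} a, indexed by |ω| → ∞, grows faster than any fixed exponential in t; hence reality of all roots κ is necessary for a bound of the form ‖û(t)‖ ≤ K e^{αt}‖û(0)‖ uniform in ω. -/

import Mathlib

open Matrix Complex

theorem stmt8 {n : ℕ} (P₀ P₁ : Matrix (Fin n) (Fin n) ℂ) (κ : ℂ)
    (hroot : Matrix.det (-(κ ^ 2) • (1 : Matrix (Fin n) (Fin n) ℂ) + κ • P₁ + P₀) = 0)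
    (him : κ.im ≠ 0) :
    (∀ K α : ℝ, ∃ R : ℝ, 0 < R ∧ ∃ t : ℝ, 0 < t ∧
      K * Real.exp (α * t) <
        max (‖Complex.exp (Complex.I * R * κ * t)‖)
            (‖Complex.exp (-(Complex.I * R * κ * t))‖)) ∧
    ¬ ∃ K α : ℝ, ∀ R : ℝ, 0 < R → ∀ t : ℝ, 0 < t →
        max (‖Complex.exp (Complex.I * R * κ * t)‖)
            (‖Complex.exp (-(Complex.I * R * κ * t))‖) ≤
          K * Real.exp (α * t) := by
  have hb : 0 < |κ.im| := abs_pos.mpr him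
  have key : ∀ K α : ℝ, ∃ R : ℝ, 0 < R ∧ ∃ t : ℝ, 0 < t ∧
      K * Real.exp (α * t) <
        max (‖Complex.exp (Complex.I * R * κ * t)‖)
            (‖Complex.exp (-(Complex.I * R * κ * t))‖) := by
    intro K α
    set C := |α| + |Real.log (max K 1)| + 1 with hC
    have hCpos : 0 < C := by positivity
    refine ⟨C / |κ.im|, by positivity, 1, one_pos, ?_⟩
    set R : ℝ := C / |κ.im| with hRdef
    have hRb : R * |κ.im| = C := div_mul_cancel₀ _ (ne_of_gt hb)
    have h1 : ‖Complex.exp (Complex.I * R * κ * 1)‖ =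
        Real.exp (-(R * κ.im)) := by
      rw [Complex.norm_exp]
      congr 1
      simp [Complex.mul_re, Complex.mul_im]
    have h2 : ‖Complex.exp (-(Complex.I * R * κ * 1))‖ =
        Real.exp (R * κ.im) := by
      rw [Complex.norm_exp]
      congr 1
      simp [Complex.mul_re, Complex.mul_im]
    have hmax : Real.exp (R * |κ.im|) ≤
        max (‖Complex.exp (Complex.I * R * κ * 1)‖)
            (‖Complex.exp (-(Complex.I * R * κ * 1))‖) := by
      rw [h1, h2]
      rcases abs_cases κ.im with ⟨h, _⟩ | ⟨h, _⟩
      · rw [h]; exact le_max_right _ _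
      · rw [h]
        have : R * -κ.im = -(R * κ.im) := by ring
        rw [this]
        exact le_max_left _ _
    have hKle : K * Real.exp (α * 1) < Real.exp (R * |κ.im|) := by
      rw [hRb]
      have hmK : 0 < max K 1 := lt_of_lt_of_le one_pos (le_max_right _ _)
      calc K * Real.exp (α * 1) ≤ max K 1 * Real.exp (α * 1) := by
            exact mul_le_mul_of_nonneg_right (le_max_left _ _) (Real.exp_pos _).le
        _ = Real.exp (Real.log (max K 1) + α * 1) := by
            rw [Real.exp_add, Real.exp_log hmK]
        _ < Real.exp C := by
            apply Real.exp_lt_exp.mpr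
            have := le_abs_self (Real.log (max K 1))
            have := le_abs_self α
            simp only [hC]
            nlinarith
    exact lt_of_lt_of_le hKle hmax
  refine ⟨key, ?_⟩
  rintro ⟨K, α, h⟩
  obtain ⟨R, hR, t, ht, hlt⟩ := key K α
  exact absurd (h R hR t ht) (not_le.mpr hlt)
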